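/- arXiv:1909.09030 — 2 statements merged into one kernel-verified Lean document; each statement's English description precedes it below -/
import Mathlib

section
/- Let G be a finite graph and, for every pair {P, P'} of distinct maximal tangles of G, let A_{P,P'} be the set of all separations of G that distinguish P and P' efficiently. Then the family of all these sets A_{P,P'} splinters in the universe of separations of G. -/
/-!
For a finite graph `G`, the family of the sets `A_{P,P'}` of separations of
`G` efficiently distinguishing a pair of distinct maximal tangles splinters.
-/

variable {V : Type*} [Fintype V] [DecidableEq V]

/-- An oriented separation-candidate of a graph on `V`: a pair of vertex sets. -/
abbrev GSep (V : Type*) := Finset V × Finset V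

/-- The involution `(A,B) ↦ (B,A)`. -/
def sepInv (p : GSep V) : GSep V := (p.2, p.1)

/-- The partial order `(A,B) ≤ (C,D)` iff `A ⊆ C` and `B ⊇ D`. -/
def sepLE (p q : GSep V) : Prop := p.1 ⊆ q.1 ∧ q.2 ⊆ p.2

/-- Strict version of `sepLE`. -/
def sepLT (p q : GSep V) : Prop := sepLE p q ∧ p ≠ q

/-- The join `(A,B) ∨ (C,D) = (A ∪ C, B ∩ D)`. -/
def sepJoin (p q : GSep V) : GSep V := (p.1 ∪ q.1, p.2 ∩ q.2)

/-- The meet `(A,B) ∧ (C,D) = (A ∩ C, B ∪ D)`. -/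
def sepMeet (p q : GSep V) : GSep V := (p.1 ∩ q.1, p.2 ∪ q.2)

/-- The order `|(A,B)| = |A ∩ B|`. -/
def sepOrder (p : GSep V) : ℕ := (p.1 ∩ p.2).card

/-- `(A,B)` is a separation of `G`: `A ∪ B = V` and `G` has no edge between
`A \ B` and `B \ A`. -/
def IsSep (G : SimpleGraph V) (p : GSep V) : Prop :=
  p.1 ∪ p.2 = Finset.univ ∧
    ∀ a b : V, G.Adj a b → a ∈ p.1 → a ∉ p.2 → b ∈ p.2 → b ∉ p.1 → False

/-- Two separations are nested if they have `sepLE`-comparable orientations. -/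
def sepNested (p q : GSep V) : Prop :=
  sepLE p q ∨ sepLE p (sepInv q) ∨ sepLE (sepInv p) q ∨ sepLE (sepInv p) (sepInv q)

/-- `c` is a corner separation of `p` and `q`: a join of orientations of `p`
and `q`, or the involution of such a join. -/
def sepIsCorner (c p q : GSep V) : Prop :=
  ∃ p' q', (p' = p ∨ p' = sepInv p) ∧ (q' = q ∨ q' = sepInv q) ∧
    (c = sepJoin p' q' ∨ c = sepInv (sepJoin p' q'))

/-- For three members `(A₁,B₁), (A₂,B₂), (A₃,B₃)` of a tangle there must be a
vertex or an edge of `G` not contained in any of the induced subgraphs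
`G[Aᵢ]`: this expresses `G[A₁] ∪ G[A₂] ∪ G[A₃] ≠ G`. -/
def TangleAvoids (G : SimpleGraph V) (p₁ p₂ p₃ : GSep V) : Prop :=
  (∃ v : V, v ∉ p₁.1 ∧ v ∉ p₂.1 ∧ v ∉ p₃.1) ∨
  (∃ x y : V, G.Adj x y ∧ ¬(x ∈ p₁.1 ∧ y ∈ p₁.1) ∧
    ¬(x ∈ p₂.1 ∧ y ∈ p₂.1) ∧ ¬(x ∈ p₃.1 ∧ y ∈ p₃.1))

/-- A `k`-tangle of `G`: an orientation of all separations of order `< k`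
satisfying the tangle property (T). -/
def IsTangle (G : SimpleGraph V) (k : ℕ) (τ : Set (GSep V)) : Prop :=
  (∀ p ∈ τ, IsSep G p ∧ sepOrder p < k) ∧
  (∀ p : GSep V, IsSep G p → sepOrder p < k →
    (p ∈ τ ∨ sepInv p ∈ τ) ∧ (p ∈ τ → sepInv p ∈ τ → p = sepInv p)) ∧
  (∀ p₁ ∈ τ, ∀ p₂ ∈ τ, ∀ p₃ ∈ τ, TangleAvoids G p₁ p₂ p₃)

/-- A maximal tangle of `G`: a `k`-tangle, for some `k`, that is not properly
contained in any other tangle (equivalently, not a subset of an `l`-tangle for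
any `l > k`). -/
def IsMaximalTangle (G : SimpleGraph V) (τ : Set (GSep V)) : Prop :=
  (∃ k, IsTangle G k τ) ∧ ∀ τ' : Set (GSep V), (∃ l, IsTangle G l τ') →
    τ ⊆ τ' → τ' = τ

/-- `p` distinguishes the tangles `τ` and `τ'`. -/
def sepDistinguishes (p : GSep V) (τ τ' : Set (GSep V)) : Prop :=
  (p ∈ τ ∧ sepInv p ∈ τ') ∨ (sepInv p ∈ τ ∧ p ∈ τ')

/-- `p` distinguishes `τ` and `τ'` efficiently: it does so and has minimum
order among all separations of `G` distinguishing `τ` and `τ'`. -/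
def sepEffDist (G : SimpleGraph V) (p : GSep V) (τ τ' : Set (GSep V)) : Prop :=
  IsSep G p ∧ sepDistinguishes p τ τ' ∧
    ∀ q : GSep V, IsSep G q → sepDistinguishes q τ τ' → sepOrder p ≤ sepOrder q

/-- A family `A` of subsets of the universe of separations of `G` splinters
if for all `i`, `j` and every crossing pair `a ∈ A i \ A j`, `b ∈ A j \ A i`,
at least one corner separation of `a` and `b` lies in `A i ∪ A j`. -/
def sepSplinters {I : Type*} (A : I → Set (GSep V)) : Prop :=
  ∀ i j : I, ∀ a ∈ A i, a ∉ A j → ∀ b ∈ A j, b ∉ A i → ¬ sepNested a b →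
    ∃ c, sepIsCorner c a b ∧ c ∈ A i ∪ A j


set_option linter.unusedSectionVars false

section SplinterHelpers

variable {G : SimpleGraph V} {p q : GSep V} {τ τ' : Set (GSep V)} {k : ℕ}

lemma sepInv_inv (p : GSep V) : sepInv (sepInv p) = p := rfl

lemma sepOrder_inv (p : GSep V) : sepOrder (sepInv p) = sepOrder p := by
  simp [sepOrder, sepInv, Finset.inter_comm]

lemma sep_cover (h : IsSep G p) (v : V) : v ∈ p.1 ∨ v ∈ p.2 := by
  have hv : v ∈ p.1 ∪ p.2 := h.1 ▸ Finset.mem_univ v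
  exact Finset.mem_union.mp hv

lemma sep_edge (h : IsSep G p) {x y : V} (hadj : G.Adj x y) :
    (x ∈ p.1 ∧ y ∈ p.1) ∨ (x ∈ p.2 ∧ y ∈ p.2) := by
  by_cases hx1 : x ∈ p.1 <;> by_cases hx2 : x ∈ p.2 <;>
    by_cases hy1 : y ∈ p.1 <;> by_cases hy2 : y ∈ p.2 <;>
    first
      | (left; exact ⟨by assumption, by assumption⟩)
      | (right; exact ⟨by assumption, by assumption⟩)
      | (rcases sep_cover h x with h'|h' <;> tauto)
      | (rcases sep_cover h y with h'|h' <;> tauto)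
      | (exact (h.2 x y hadj hx1 hx2 hy2 hy1).elim)
      | (exact (h.2 y x hadj.symm hy1 hy2 hx2 hx1).elim)

lemma isSep_inv (h : IsSep G p) : IsSep G (sepInv p) := by
  refine ⟨?_, ?_⟩
  · simpa [sepInv, Finset.union_comm] using h.1
  · intro a b hadj ha1 ha2 hb2 hb1
    exact h.2 b a hadj.symm hb2 hb1 ha1 ha2

lemma isSep_join (hp : IsSep G p) (hq : IsSep G q) : IsSep G (sepJoin p q) := by
  constructor
  · apply Finset.eq_univ_iff_forall.mpr
    intro v
    have h1 := sep_cover hp v; have h2 := sep_cover hq v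
    simp only [sepJoin, Finset.mem_union, Finset.mem_inter]
    tauto
  · intro a b hadj ha1 ha2 hb2 hb1
    simp only [sepJoin, Finset.mem_union, Finset.mem_inter] at ha1 ha2 hb2 hb1
    rcases sep_edge hp hadj with ⟨_, h⟩ | ⟨hap, _⟩
    · exact hb1 (Or.inl h)
    · rcases sep_edge hq hadj with ⟨_, h⟩ | ⟨haq, _⟩
      · exact hb1 (Or.inr h)
      · exact ha2 ⟨hap, haq⟩

lemma isSep_meet (hp : IsSep G p) (hq : IsSep G q) : IsSep G (sepMeet p q) :=
  isSep_inv (isSep_join (isSep_inv hp) (isSep_inv hq))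

lemma sepOrder_submod (p q : GSep V) :
    sepOrder (sepJoin p q) + sepOrder (sepMeet p q) ≤ sepOrder p + sepOrder q := by
  simp only [sepOrder, sepJoin, sepMeet]
  have hsub1 : (p.1 ∪ q.1) ∩ (p.2 ∩ q.2) ∪ (p.1 ∩ q.1) ∩ (p.2 ∪ q.2)
      ⊆ p.1 ∩ p.2 ∪ q.1 ∩ q.2 := by
    intro v hv
    simp only [Finset.mem_union, Finset.mem_inter] at *
    tauto
  have hsub2 : ((p.1 ∪ q.1) ∩ (p.2 ∩ q.2)) ∩ ((p.1 ∩ q.1) ∩ (p.2 ∪ q.2))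
      ⊆ (p.1 ∩ p.2) ∩ (q.1 ∩ q.2) := by
    intro v hv
    simp only [Finset.mem_union, Finset.mem_inter] at *
    tauto
  calc ((p.1 ∪ q.1) ∩ (p.2 ∩ q.2)).card + ((p.1 ∩ q.1) ∩ (p.2 ∪ q.2)).card
      = ((p.1 ∪ q.1) ∩ (p.2 ∩ q.2) ∪ (p.1 ∩ q.1) ∩ (p.2 ∪ q.2)).card
        + (((p.1 ∪ q.1) ∩ (p.2 ∩ q.2)) ∩ ((p.1 ∩ q.1) ∩ (p.2 ∪ q.2))).card :=
        (Finset.card_union_add_card_inter _ _).symm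
    _ ≤ (p.1 ∩ p.2 ∪ q.1 ∩ q.2).card + ((p.1 ∩ p.2) ∩ (q.1 ∩ q.2)).card :=
        Nat.add_le_add (Finset.card_le_card hsub1) (Finset.card_le_card hsub2)
    _ = (p.1 ∩ p.2).card + (q.1 ∩ q.2).card := Finset.card_union_add_card_inter _ _

lemma sepDist_symm (h : sepDistinguishes p τ τ') : sepDistinguishes p τ' τ := by
  rcases h with ⟨h1, h2⟩ | ⟨h1, h2⟩
  · exact Or.inr ⟨h2, h1⟩
  · exact Or.inl ⟨h2, h1⟩

lemma sepJoin_comm (p q : GSep V) : sepJoin p q = sepJoin q p := by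
  simp [sepJoin, Finset.union_comm, Finset.inter_comm]

lemma sepIsCorner_symm {c : GSep V} (h : sepIsCorner c p q) : sepIsCorner c q p := by
  obtain ⟨p', q', hp, hq, hc⟩ := h
  refine ⟨q', p', hq, hp, ?_⟩
  rw [sepJoin_comm q' p']
  exact hc

lemma tangle_triple_false (hτ : IsTangle G k τ) {p₁ p₂ p₃ : GSep V}
    (h1 : p₁ ∈ τ) (h2 : p₂ ∈ τ) (h3 : p₃ ∈ τ)
    (hv : ∀ v : V, v ∈ p₁.1 ∨ v ∈ p₂.1 ∨ v ∈ p₃.1)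
    (he : ∀ x y : V, G.Adj x y →
      (x ∈ p₁.1 ∧ y ∈ p₁.1) ∨ (x ∈ p₂.1 ∧ y ∈ p₂.1) ∨ (x ∈ p₃.1 ∧ y ∈ p₃.1)) : False := by
  rcases hτ.2.2 p₁ h1 p₂ h2 p₃ h3 with ⟨v, hv1, hv2, hv3⟩ | ⟨x, y, hadj, hx, hy, hz⟩
  · rcases hv v with h | h | h <;> tauto
  · rcases he x y hadj with h | h | h <;> tauto

lemma corner_in_tangle (hτ : IsTangle G k τ)
    (hp : p ∈ τ) (hq : q ∈ τ) (hsep : IsSep G (sepJoin p q))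
    (ho : sepOrder (sepJoin p q) < k) : sepJoin p q ∈ τ := by
  have hps := (hτ.1 p hp).1
  have hqs := (hτ.1 q hq).1
  rcases (hτ.2.1 _ hsep ho).1 with h | h
  · exact h
  · exfalso
    refine tangle_triple_false hτ hp hq h ?_ ?_
    · intro v
      simp only [sepInv, sepJoin, Finset.mem_inter]
      rcases sep_cover hps v with h1 | h1 <;> rcases sep_cover hqs v with h2 | h2 <;> tauto
    · intro x y hadj
      simp only [sepInv, sepJoin, Finset.mem_inter]
      rcases sep_edge hps hadj with h1 | h1 <;> rcases sep_edge hqs hadj with h2 | h2 <;> tauto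

lemma corner_opp_in (hτ : IsTangle G k τ)
    (hp : p ∈ τ) (hq : sepInv q ∈ τ) (hsep : IsSep G (sepJoin p q))
    (ho : sepOrder (sepJoin p q) < k) : sepInv (sepJoin p q) ∈ τ := by
  have hps := (hτ.1 p hp).1
  have hqs : IsSep G q := isSep_inv (hτ.1 _ hq).1
  rcases (hτ.2.1 _ hsep ho).1 with h | h
  · exfalso
    refine tangle_triple_false hτ hp hq h ?_ ?_
    · intro v
      simp only [sepInv, sepJoin, Finset.mem_union]
      rcases sep_cover hps v with h1 | h1 <;> rcases sep_cover hqs v with h2 | h2 <;> tauto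
    · intro x y hadj
      simp only [sepInv, sepJoin, Finset.mem_union]
      rcases sep_edge hps hadj with h1 | h1 <;> rcases sep_edge hqs hadj with h2 | h2 <;> tauto
  · exact h


lemma no_meet_pair₁ (hτ : IsTangle G k τ) {r s : GSep V}
    (hrsep : IsSep G r) (hssep : IsSep G s) (hmem : sepInv r ∈ τ)
    (h1 : sepMeet r s ∈ τ) (h2 : sepMeet r (sepInv s) ∈ τ) : False := by
  refine tangle_triple_false hτ hmem h1 h2 ?_ ?_
  · intro v
    simp only [sepMeet, sepInv, Finset.mem_inter, Finset.mem_union]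
    rcases sep_cover hrsep v with h | h <;> rcases sep_cover hssep v with h' | h' <;> tauto
  · intro x y hadj
    simp only [sepMeet, sepInv, Finset.mem_inter, Finset.mem_union]
    rcases sep_edge hrsep hadj with h | h <;> rcases sep_edge hssep hadj with h' | h' <;> tauto

lemma no_meet_pair₂ (hτ : IsTangle G k τ) {r s : GSep V}
    (hrsep : IsSep G r) (hssep : IsSep G s) (hmem : r ∈ τ)
    (h1 : sepInv (sepMeet r s) ∈ τ) (h2 : sepInv (sepMeet r (sepInv s)) ∈ τ) : False := by
  refine tangle_triple_false hτ hmem h1 h2 ?_ ?_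
  · intro v
    simp only [sepMeet, sepInv, Finset.mem_inter, Finset.mem_union]
    rcases sep_cover hrsep v with h | h <;> rcases sep_cover hssep v with h' | h' <;> tauto
  · intro x y hadj
    simp only [sepMeet, sepInv, Finset.mem_inter, Finset.mem_union]
    rcases sep_edge hrsep hadj with h | h <;> rcases sep_edge hssep hadj with h' | h' <;> tauto

lemma no_meet_pair₃ (hτ : IsTangle G k τ) {r s : GSep V}
    (hrsep : IsSep G r) (hssep : IsSep G s) (hmem : r ∈ τ)
    (h1 : sepMeet r s ∈ τ) (h2 : sepInv (sepMeet r (sepInv s)) ∈ τ) : False := by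
  refine tangle_triple_false hτ hmem h1 h2 ?_ ?_
  · intro v
    simp only [sepMeet, sepInv, Finset.mem_inter, Finset.mem_union]
    rcases sep_cover hrsep v with h | h <;> rcases sep_cover hssep v with h' | h' <;> tauto
  · intro x y hadj
    simp only [sepMeet, sepInv, Finset.mem_inter, Finset.mem_union]
    rcases sep_edge hrsep hadj with h | h <;> rcases sep_edge hssep hadj with h' | h' <;> tauto

lemma no_meet_pair₄ (hτ : IsTangle G k τ) {r s : GSep V}
    (hrsep : IsSep G r) (hssep : IsSep G s) (hmem : r ∈ τ)
    (h1 : sepInv (sepMeet r s) ∈ τ) (h2 : sepMeet r (sepInv s) ∈ τ) : False := by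
  refine tangle_triple_false hτ hmem h1 h2 ?_ ?_
  · intro v
    simp only [sepMeet, sepInv, Finset.mem_inter, Finset.mem_union]
    rcases sep_cover hrsep v with h | h <;> rcases sep_cover hssep v with h' | h' <;> tauto
  · intro x y hadj
    simp only [sepMeet, sepInv, Finset.mem_inter, Finset.mem_union]
    rcases sep_edge hrsep hadj with h | h <;> rcases sep_edge hssep hadj with h' | h' <;> tauto

set_option maxHeartbeats 1600000 in
lemma splinter_main (G : SimpleGraph V) {P P' Q Q' : Set (GSep V)} {kP kP' kQ kQ' : ℕ}
    (hP : IsTangle G kP P) (hP' : IsTangle G kP' P')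
    (hQ : IsTangle G kQ Q) (hQ' : IsTangle G kQ' Q')
    {r s : GSep V} (hr : sepEffDist G r P P') (hs : sepEffDist G s Q Q')
    (hord : sepOrder r ≤ sepOrder s) (hnr : ¬ sepEffDist G r Q Q') :
    ∃ c, sepIsCorner c r s ∧ sepEffDist G c Q Q' := by
  obtain ⟨hrsep, hrdist, hrmin⟩ := hr
  obtain ⟨hssep, hsdist, hsmin⟩ := hs
  have hnd : ¬ sepDistinguishes r Q Q' := fun h =>
    hnr ⟨hrsep, h, fun q hq hd => le_trans hord (hsmin q hq hd)⟩
  obtain ⟨sQ, hsQor, hsQ, hsQ'⟩ :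
      ∃ sQ, (sQ = s ∨ sQ = sepInv s) ∧ sQ ∈ Q ∧ sepInv sQ ∈ Q' := by
    rcases hsdist with ⟨h1, h2⟩ | ⟨h1, h2⟩
    · exact ⟨s, Or.inl rfl, h1, h2⟩
    · exact ⟨sepInv s, Or.inr rfl, h1, by rw [sepInv_inv]; exact h2⟩
  have hsQsep : IsSep G sQ := (hQ.1 _ hsQ).1
  have hsQ'sep : IsSep G (sepInv sQ) := isSep_inv hsQsep
  have horders : sepOrder sQ = sepOrder s := by
    rcases hsQor with h | h <;> simp [h, sepOrder_inv]
  have hσkQ : sepOrder sQ < kQ := (hQ.1 _ hsQ).2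
  have hσkQ' : sepOrder sQ < kQ' := by
    have := (hQ'.1 _ hsQ').2
    rwa [sepOrder_inv] at this
  have hρσ : sepOrder r ≤ sepOrder sQ := horders ▸ hord
  obtain ⟨rQ, hrQor, hrQQ, hrQQ'⟩ :
      ∃ rQ, (rQ = r ∨ rQ = sepInv r) ∧ rQ ∈ Q ∧ rQ ∈ Q' := by
    have h1 := (hQ.2.1 r hrsep (lt_of_le_of_lt hρσ hσkQ)).1
    have h2 := (hQ'.2.1 r hrsep (lt_of_le_of_lt hρσ hσkQ')).1
    rcases h1 with h1 | h1 <;> rcases h2 with h2 | h2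
    · exact ⟨r, Or.inl rfl, h1, h2⟩
    · exact absurd (Or.inl ⟨h1, h2⟩) hnd
    · exact absurd (Or.inr ⟨h1, h2⟩) hnd
    · exact ⟨sepInv r, Or.inr rfl, h1, h2⟩
  have hrQsep : IsSep G rQ := (hQ.1 _ hrQQ).1
  have hordr : sepOrder rQ = sepOrder r := by
    rcases hrQor with h | h <;> simp [h, sepOrder_inv]
  by_cases hc1 : sepOrder (sepJoin rQ sQ) ≤ sepOrder sQ
  · have hc1sep : IsSep G (sepJoin rQ sQ) := isSep_join hrQsep hsQsep
    have hc1Q : sepJoin rQ sQ ∈ Q :=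
      corner_in_tangle hQ hrQQ hsQ hc1sep (lt_of_le_of_lt hc1 hσkQ)
    have hc1Q' : sepInv (sepJoin rQ sQ) ∈ Q' :=
      corner_opp_in hQ' hrQQ' hsQ' hc1sep (lt_of_le_of_lt hc1 hσkQ')
    exact ⟨sepJoin rQ sQ, ⟨rQ, sQ, hrQor, hsQor, Or.inl rfl⟩,
      hc1sep, Or.inl ⟨hc1Q, hc1Q'⟩,
      fun q hq hd => le_trans (horders ▸ hc1) (hsmin q hq hd)⟩
  by_cases hc2 : sepOrder (sepJoin rQ (sepInv sQ)) ≤ sepOrder sQ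
  · have hc2sep : IsSep G (sepJoin rQ (sepInv sQ)) := isSep_join hrQsep hsQ'sep
    have hc2Q' : sepJoin rQ (sepInv sQ) ∈ Q' :=
      corner_in_tangle hQ' hrQQ' hsQ' hc2sep (lt_of_le_of_lt hc2 hσkQ')
    have hc2Q : sepInv (sepJoin rQ (sepInv sQ)) ∈ Q :=
      corner_opp_in hQ hrQQ (by rw [sepInv_inv]; exact hsQ) hc2sep (lt_of_le_of_lt hc2 hσkQ)
    have hsQinvor : sepInv sQ = s ∨ sepInv sQ = sepInv s := by
      rcases hsQor with h | h
      · exact Or.inr (by rw [h])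
      · exact Or.inl (by rw [h, sepInv_inv])
    exact ⟨sepJoin rQ (sepInv sQ), ⟨rQ, sepInv sQ, hrQor, hsQinvor, Or.inl rfl⟩,
      hc2sep, Or.inr ⟨hc2Q, hc2Q'⟩,
      fun q hq hd => le_trans (horders ▸ hc2) (hsmin q hq hd)⟩
  exfalso
  push_neg at hc1 hc2
  have hsub1 := sepOrder_submod rQ sQ
  have hsub2 := sepOrder_submod rQ (sepInv sQ)
  have hinvord : sepOrder (sepInv sQ) = sepOrder sQ := sepOrder_inv sQ
  have hd1lt : sepOrder (sepMeet rQ sQ) < sepOrder r := by omega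
  have hd2lt : sepOrder (sepMeet rQ (sepInv sQ)) < sepOrder r := by omega
  obtain ⟨T₀, T₁, k₀, k₁, hT₀, hT₁, hrT₀, hrT₁, hTmin⟩ :
      ∃ (T₀ T₁ : Set (GSep V)) (k₀ k₁ : ℕ), IsTangle G k₀ T₀ ∧ IsTangle G k₁ T₁ ∧
        rQ ∈ T₀ ∧ sepInv rQ ∈ T₁ ∧
        ∀ q : GSep V, IsSep G q → sepDistinguishes q T₀ T₁ → sepOrder r ≤ sepOrder q := by
    rcases hrdist with ⟨h1, h2⟩ | ⟨h1, h2⟩ <;> rcases hrQor with h | h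
    · exact ⟨P, P', kP, kP', hP, hP', by rw [h]; exact h1, by rw [h]; exact h2, hrmin⟩
    · exact ⟨P', P, kP', kP, hP', hP, by rw [h]; exact h2,
        by rw [h, sepInv_inv]; exact h1, fun q hq hd => hrmin q hq (sepDist_symm hd)⟩
    · exact ⟨P', P, kP', kP, hP', hP, by rw [h]; exact h2, by rw [h]; exact h1,
        fun q hq hd => hrmin q hq (sepDist_symm hd)⟩
    · exact ⟨P, P', kP, kP', hP, hP', by rw [h]; exact h1,
        by rw [h, sepInv_inv]; exact h2, hrmin⟩
  have hk₀ : sepOrder r < k₀ := by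
    have := (hT₀.1 _ hrT₀).2
    rwa [hordr] at this
  have hk₁ : sepOrder r < k₁ := by
    have := (hT₁.1 _ hrT₁).2
    rwa [sepOrder_inv, hordr] at this
  have hd1sep : IsSep G (sepMeet rQ sQ) := isSep_meet hrQsep hsQsep
  have hd2sep : IsSep G (sepMeet rQ (sepInv sQ)) := isSep_meet hrQsep hsQ'sep
  have agree : ∀ d : GSep V, IsSep G d → sepOrder d < sepOrder r →
      ∃ e, (e = d ∨ e = sepInv d) ∧ e ∈ T₀ ∧ e ∈ T₁ := by
    intro d hdsep hdlt
    have h0 := (hT₀.2.1 d hdsep (hdlt.trans hk₀)).1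
    have h1 := (hT₁.2.1 d hdsep (hdlt.trans hk₁)).1
    rcases h0 with h0 | h0 <;> rcases h1 with h1 | h1
    · exact ⟨d, Or.inl rfl, h0, h1⟩
    · exact absurd (hTmin d hdsep (Or.inl ⟨h0, h1⟩)) (not_le.mpr hdlt)
    · exact absurd (hTmin d hdsep (Or.inr ⟨h0, h1⟩)) (not_le.mpr hdlt)
    · exact ⟨sepInv d, Or.inr rfl, h0, h1⟩
  obtain ⟨e1, he1or, he1T₀, he1T₁⟩ := agree (sepMeet rQ sQ) hd1sep hd1lt
  obtain ⟨e2, he2or, he2T₀, he2T₁⟩ := agree (sepMeet rQ (sepInv sQ)) hd2sep hd2lt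
  rcases he1or with h1 | h1 <;> rcases he2or with h2 | h2 <;> subst h1 <;> subst h2
  · exact no_meet_pair₁ hT₁ hrQsep hsQsep hrT₁ he1T₁ he2T₁
  · exact no_meet_pair₃ hT₀ hrQsep hsQsep hrT₀ he1T₀ he2T₀
  · exact no_meet_pair₄ hT₀ hrQsep hsQsep hrT₀ he1T₀ he2T₀
  · exact no_meet_pair₂ hT₀ hrQsep hsQsep hrT₀ he1T₀ he2T₀

end SplinterHelpers

/-- **The family of the sets of efficient distinguishers of pairs of distinct
maximal tangles of a finite graph splinters.** -/
theorem graph_efficient_distinguishers_splinter (G : SimpleGraph V) :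
    sepSplinters
      (fun pp : {pp : Set (GSep V) × Set (GSep V) //
          IsMaximalTangle G pp.1 ∧ IsMaximalTangle G pp.2 ∧ pp.1 ≠ pp.2} =>
        {p | sepEffDist G p pp.1.1 pp.1.2}) := by
  unfold sepSplinters
  intro i j a ha hanj b hb hbni _
  obtain ⟨kP, hP⟩ := i.2.1.1
  obtain ⟨kP', hP'⟩ := i.2.2.1.1
  obtain ⟨kQ, hQ⟩ := j.2.1.1
  obtain ⟨kQ', hQ'⟩ := j.2.2.1.1
  rcases le_total (sepOrder a) (sepOrder b) with h | h
  · obtain ⟨c, hc, hcd⟩ := splinter_main G hP hP' hQ hQ' ha hb h hanj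
    exact ⟨c, hc, Or.inr hcd⟩
  · obtain ⟨c, hc, hcd⟩ := splinter_main G hQ hQ' hP hP' hb ha h hbni
    exact ⟨c, sepIsCorner_symm hc, Or.inl hcd⟩
end

section
/- Let U be a universe of separations, S ⊆ U a structurally submodular separation system closed under the involution, and 𝒫 a set of profiles of S. Then S contains a nested set N that distinguishes 𝒫, i.e., for every two distinct profiles P, P' ∈ 𝒫 some separation in N has one orientation in P and the other in P'. -/
/-!
Tree-of-tangles theorem for structurally submodular separation systems:
if `S` is a structurally submodular separation system inside a universe `U`
and `Ps` is a set of profiles of `S`, then `S` contains a nested set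
distinguishing `Ps`.
-/

variable {U : Type*}

/-- `star` is an order-reversing involution: `s** = s` and `r ≤ s ↔ s* ≤ r*`. -/
def OrderReversingInvolution [Lattice U] (star : U → U) : Prop :=
  (∀ s : U, star (star s) = s) ∧ ∀ r s : U, r ≤ s ↔ star s ≤ star r

/-- Two separations are nested if they have comparable orientations. -/
def Nested [Lattice U] (star : U → U) (r s : U) : Prop :=
  r ≤ s ∨ r ≤ star s ∨ star r ≤ s ∨ star r ≤ star s

/-- A `*`-closed set `S` is structurally submodular if for all `r, s ∈ S` at
least one of `r ⊔ s` and `r ⊓ s` lies in `S`. -/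
def StructSubmodular [Lattice U] (S : Set U) : Prop :=
  ∀ r ∈ S, ∀ s ∈ S, r ⊔ s ∈ S ∨ r ⊓ s ∈ S

/-- `O` is an orientation of `S`: it contains, for each `s ∈ S`, exactly one
of `s` and `star s`. -/
def Orients [Lattice U] (star : U → U) (S O : Set U) : Prop :=
  O ⊆ S ∧ ∀ s ∈ S, (s ∈ O ∨ star s ∈ O) ∧ (s ∈ O → star s ∈ O → s = star s)

/-- `O` is consistent: there are no `r, s ∈ O` with `star r < s`. -/
def Consistent [Lattice U] (star : U → U) (O : Set U) : Prop :=
  ∀ r ∈ O, ∀ s ∈ O, ¬ star r < s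

/-- A profile of `S` is a consistent orientation `P` of `S` such that for all
`r, s ∈ P` we have `star r ⊓ star s ∉ P`. -/
def IsProfile [Lattice U] (star : U → U) (S P : Set U) : Prop :=
  Orients star S P ∧ Consistent star P ∧
    ∀ r ∈ P, ∀ s ∈ P, star r ⊓ star s ∉ P

/-- `s` distinguishes `P` and `P'`: one orientation of `s` lies in `P` and the
other in `P'`. -/
def Distinguishes [Lattice U] (star : U → U) (s : U) (P P' : Set U) : Prop :=
  (s ∈ P ∧ star s ∈ P') ∨ (star s ∈ P ∧ s ∈ P')

/-! ### Auxiliary lemmas -/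

section Aux

variable [Lattice U] {star : U → U}

/-- `c` is a corner of `r` and `s`: the join of an orientation of `r` with an
orientation of `s`. -/
def IsCornerSep (star : U → U) (r s c : U) : Prop :=
  ∃ x y, (x = r ∨ x = star r) ∧ (y = s ∨ y = star s) ∧ c = x ⊔ y

lemma ori_ss (h : OrderReversingInvolution star) (s : U) : star (star s) = s := h.1 s

lemma ori_anti (h : OrderReversingInvolution star) {r s : U} (hrs : r ≤ s) :
    star s ≤ star r := (h.2 r s).1 hrs

lemma ori_le_of_star_le (h : OrderReversingInvolution star) {r s : U}
    (hrs : star s ≤ star r) : r ≤ s := (h.2 r s).2 hrs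

/-- `r ≤ s*` implies `s ≤ r*`. -/
lemma ori_le_star_swap (h : OrderReversingInvolution star) {r s : U}
    (hrs : r ≤ star s) : s ≤ star r := by
  have := ori_anti h hrs; rwa [ori_ss h s] at this

/-- `r* ≤ s` implies `s* ≤ r`. -/
lemma ori_star_le_swap (h : OrderReversingInvolution star) {r s : U}
    (hrs : star r ≤ s) : star s ≤ r := by
  have := ori_anti h hrs; rwa [ori_ss h r] at this

lemma ori_star_sup (h : OrderReversingInvolution star) (a b : U) :
    star (a ⊔ b) = star a ⊓ star b := by
  apply le_antisymm
  · exact le_inf (ori_anti h le_sup_left) (ori_anti h le_sup_right)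
  · have h1 : a ≤ star (star a ⊓ star b) := ori_le_star_swap h (by exact inf_le_left)
    have h2 : b ≤ star (star a ⊓ star b) := ori_le_star_swap h (by exact inf_le_right)
    have h3 : a ⊔ b ≤ star (star a ⊓ star b) := sup_le h1 h2
    have := ori_anti h h3; rwa [ori_ss h] at this

lemma ori_star_inf (h : OrderReversingInvolution star) (a b : U) :
    star (a ⊓ b) = star a ⊔ star b := by
  have := ori_star_sup h (star a) (star b)
  rw [ori_ss h, ori_ss h] at this
  calc star (a ⊓ b) = star (star (star a ⊔ star b)) := by rw [this]
    _ = star a ⊔ star b := ori_ss h _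

lemma nested_refl (star : U → U) (a : U) : Nested star a a := Or.inl le_rfl

lemma nested_symm (h : OrderReversingInvolution star) {a b : U}
    (hab : Nested star a b) : Nested star b a := by
  rcases hab with h1 | h1 | h1 | h1
  · exact Or.inr (Or.inr (Or.inr (ori_anti h h1)))
  · exact Or.inr (Or.inl (ori_le_star_swap h h1))
  · exact Or.inr (Or.inr (Or.inl (ori_star_le_swap h h1)))
  · exact Or.inl (ori_le_of_star_le h h1)

lemma nested_star_left (h : OrderReversingInvolution star) {a b : U} :
    Nested star (star a) b ↔ Nested star a b := by
  unfold Nested; rw [ori_ss h a]; tauto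

lemma nested_star_right (h : OrderReversingInvolution star) {a b : U} :
    Nested star a (star b) ↔ Nested star a b := by
  unfold Nested; rw [ori_ss h b]; tauto

lemma not_nested_symm (h : OrderReversingInvolution star) {a b : U}
    (hab : ¬ Nested star a b) : ¬ Nested star b a := fun hn => hab (nested_symm h hn)

lemma not_nested_star_left (h : OrderReversingInvolution star) {a b : U}
    (hab : ¬ Nested star a b) : ¬ Nested star (star a) b :=
  fun hn => hab ((nested_star_left h).mp hn)

lemma not_nested_star_right (h : OrderReversingInvolution star) {a b : U}
    (hab : ¬ Nested star a b) : ¬ Nested star a (star b) :=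
  fun hn => hab ((nested_star_right h).mp hn)

/-- A corner is nested with its first parent. -/
lemma corner_nested_left (h : OrderReversingInvolution star) {r s c : U}
    (hc : IsCornerSep star r s c) : Nested star r c := by
  obtain ⟨x, y, hx, hy, rfl⟩ := hc
  rcases hx with rfl | rfl
  · exact Or.inl le_sup_left
  · exact Or.inr (Or.inr (Or.inl le_sup_left))

/-- A corner is nested with its second parent. -/
lemma corner_nested_right (h : OrderReversingInvolution star) {r s c : U}
    (hc : IsCornerSep star r s c) : Nested star s c := by
  obtain ⟨x, y, hx, hy, rfl⟩ := hc
  rcases hy with rfl | rfl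
  · exact Or.inl le_sup_right
  · exact Or.inr (Or.inr (Or.inl le_sup_right))

/-- The fish lemma: if `r` and `s` cross then any separation nested with both
`r` and `s` is nested with every corner of `r` and `s`. -/
lemma fish (h : OrderReversingInvolution star) {r s c t : U}
    (hns : ¬ Nested star r s) (hc : IsCornerSep star r s c)
    (h1 : Nested star t r) (h2 : Nested star t s) : Nested star t c := by
  obtain ⟨x, y, hx, hy, rfl⟩ := hc
  have hxy : ¬ Nested star x y := by
    rcases hx with rfl | rfl <;> rcases hy with rfl | rfl
    · exact hns
    · exact not_nested_star_right h hns
    · exact not_nested_star_left h hns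
    · exact not_nested_star_right h (not_nested_star_left h hns)
  have h1' : Nested star t x := by
    rcases hx with rfl | rfl
    · exact h1
    · exact (nested_star_right h).mpr h1
  have h2' : Nested star t y := by
    rcases hy with rfl | rfl
    · exact h2
    · exact (nested_star_right h).mpr h2
  rcases h1' with ha | ha | ha | ha
  · exact Or.inl (ha.trans le_sup_left)
  · -- t ≤ x*, i.e. x ≤ t*
    have hxt : x ≤ star t := ori_le_star_swap h ha
    rcases h2' with hb | hb | hb | hb
    · exact Or.inl (hb.trans le_sup_right)
    · -- y ≤ t* as well
      have hyt : y ≤ star t := ori_le_star_swap h hb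
      exact Or.inr (Or.inl (ori_le_star_swap h (sup_le hxt hyt)))
    · exact Or.inr (Or.inr (Or.inl (hb.trans le_sup_right)))
    · -- y ≤ t ≤ x*, contradiction with crossing
      have hyt : y ≤ t := ori_le_of_star_le h hb
      exact absurd (Or.inr (Or.inl (ori_le_star_swap h (hyt.trans ha)))) hxy
  · exact Or.inr (Or.inr (Or.inl (ha.trans le_sup_left)))
  · -- x ≤ t
    have hxt : x ≤ t := ori_le_of_star_le h ha
    rcases h2' with hb | hb | hb | hb
    · exact absurd (Or.inl (hxt.trans hb)) hxy
    · exact absurd (Or.inr (Or.inl (hxt.trans hb))) hxy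
    · exact Or.inr (Or.inr (Or.inl (hb.trans le_sup_right)))
    · have hyt : y ≤ t := ori_le_of_star_le h hb
      exact Or.inr (Or.inr (Or.inr (ori_anti h (sup_le hxt hyt))))

/-! ### Profile lemmas -/

variable {S : Set U}

/-- The key lemma: if `r ∈ P`, `s ∈ P`, `r* ∈ P'` and `r, s` cross, then the
corner `r ⊔ s` (if in `S`) lies in `P` and its inverse lies in `P'`. -/
lemma sup_mem_of_profiles (h : OrderReversingInvolution star)
    {P P' : Set U} (hP : IsProfile star S P) (hP' : IsProfile star S P')
    {r s : U} (hr : r ∈ P) (hs : s ∈ P) (hr' : star r ∈ P')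
    (hns : ¬ Nested star r s) (hcS : r ⊔ s ∈ S) :
    (r ⊔ s) ∈ P ∧ star (r ⊔ s) ∈ P' := by
  constructor
  · rcases (hP.1.2 _ hcS).1 with hm | hm
    · exact hm
    · exfalso
      rw [ori_star_sup h] at hm
      exact hP.2.2 r hr s hs hm
  · have hlt : r < r ⊔ s := by
      refine lt_of_le_of_ne le_sup_left (fun he => hns ?_)
      have hsr : s ≤ r := by rw [he]; exact le_sup_right
      exact Or.inr (Or.inr (Or.inr (ori_anti h hsr)))
    rcases (hP'.1.2 _ hcS).1 with hm | hm
    · exfalso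
      have := hP'.2.1 (star r) hr' (r ⊔ s) hm
      rw [ori_ss h] at this
      exact this hlt
    · exact hm

lemma dist_symm {star : U → U} {c : U} {P P' : Set U}
    (hd : Distinguishes star c P P') : Distinguishes star c P' P := by
  rcases hd with ⟨h1, h2⟩ | ⟨h1, h2⟩
  · exact Or.inr ⟨h2, h1⟩
  · exact Or.inl ⟨h2, h1⟩

/-- If `u` distinguishes `P, P'` (oriented `u ∈ P`) and `v` distinguishes them
with `v ∈ P`, `v* ∈ P'`, then both co-oriented corners distinguish `P, P'`. -/
lemma K_dist (h : OrderReversingInvolution star)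
    {P P' : Set U} (hP : IsProfile star S P) (hP' : IsProfile star S P')
    {u v : U} (hu : u ∈ P) (hu' : star u ∈ P') (hv : v ∈ P) (hv' : star v ∈ P')
    (hns : ¬ Nested star u v) :
    (u ⊔ v ∈ S → Distinguishes star (u ⊔ v) P P') ∧
    (star u ⊔ star v ∈ S → Distinguishes star (star u ⊔ star v) P P') := by
  constructor
  · intro hcS
    obtain ⟨h1, h2⟩ := sup_mem_of_profiles h hP hP' hu hv hu' hns hcS
    exact Or.inl ⟨h1, h2⟩
  · intro hcS
    have hns' : ¬ Nested star (star u) (star v) :=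
      not_nested_star_right h (not_nested_star_left h hns)
    have huu : star (star u) ∈ P := by rw [ori_ss h]; exact hu
    obtain ⟨h1, h2⟩ := sup_mem_of_profiles h hP' hP hu' hv' huu hns' hcS
    exact Or.inr ⟨h2, h1⟩

/-- If `u` distinguishes `P, P'` (oriented `u ∈ P`, `u* ∈ P'`) and `v` lies in
both `P` and `P'`, then the corners `u ⊔ v` and `u* ⊔ v` distinguish `P, P'`. -/
lemma K_common (h : OrderReversingInvolution star)
    {P P' : Set U} (hP : IsProfile star S P) (hP' : IsProfile star S P')
    {u v : U} (hu : u ∈ P) (hu' : star u ∈ P') (hv : v ∈ P) (hv' : v ∈ P')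
    (hns : ¬ Nested star u v) :
    (u ⊔ v ∈ S → Distinguishes star (u ⊔ v) P P') ∧
    (star u ⊔ v ∈ S → Distinguishes star (star u ⊔ v) P P') := by
  constructor
  · intro hcS
    obtain ⟨h1, h2⟩ := sup_mem_of_profiles h hP hP' hu hv hu' hns hcS
    exact Or.inl ⟨h1, h2⟩
  · intro hcS
    have hns' : ¬ Nested star (star u) v := not_nested_star_left h hns
    have huu : star (star u) ∈ P := by rw [ori_ss h]; exact hu
    obtain ⟨h1, h2⟩ := sup_mem_of_profiles h hP' hP hu' hv' huu hns' hcS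
    exact Or.inr ⟨h2, h1⟩

end Aux

section Corner

variable [Lattice U] {star : U → U} {S : Set U}

/-- The corner lemma (ordered version): if `r` distinguishes `P, P'` and `s`
distinguishes `Q, Q'` and `r, s` cross, then some corner of `r, s` lying in
`S` distinguishes `P, P'` or `Q, Q'`. -/
lemma corner_core (h : OrderReversingInvolution star)
    (hSclosed : ∀ s ∈ S, star s ∈ S) (hSsub : StructSubmodular S)
    {P P' Q Q' : Set U}
    (hP : IsProfile star S P) (hP' : IsProfile star S P')
    (hQ : IsProfile star S Q) (hQ' : IsProfile star S Q')
    {r s : U} (hrS : r ∈ S) (hsS : s ∈ S)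
    (hr : r ∈ P) (hr' : star r ∈ P') (hs : s ∈ Q) (hs' : star s ∈ Q')
    (hns : ¬ Nested star r s) :
    ∃ c, c ∈ S ∧ IsCornerSep star r s c ∧
      (Distinguishes star c P P' ∨ Distinguishes star c Q Q') := by
  have subm : ∀ x y, x ∈ S → y ∈ S → (x ⊔ y ∈ S ∨ star x ⊔ star y ∈ S) := by
    intro x y hx hy
    rcases hSsub x hx y hy with hh | hh
    · exact Or.inl hh
    · right; have := hSclosed _ hh; rwa [ori_star_inf h] at this
  have hsS' : star s ∈ S := hSclosed _ hsS
  have hrS' : star r ∈ S := hSclosed _ hrS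
  -- orientation of s in P
  rcases (hP.1.2 s hsS).1 with hsP | hsP
  · -- s ∈ P; orientation of s in P'
    rcases (hP'.1.2 s hsS).1 with hsP' | hsP'
    · -- s ∈ P ∩ P' : common for (P, P'). Look at r in Q, Q'.
      rcases (hQ.1.2 r hrS).1 with hrQ | hrQ
      · rcases (hQ'.1.2 r hrS).1 with hrQ' | hrQ'
        · -- r ∈ Q ∩ Q' : common for (Q, Q').  Case C.
          rcases subm (star r) s hrS' hsS with hc | hc
          · refine ⟨star r ⊔ s, hc, ⟨star r, s, Or.inr rfl, Or.inl rfl, rfl⟩, Or.inl ?_⟩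
            exact (K_common h hP hP' hr hr' hsP hsP' hns).2 hc
          · rw [ori_ss h] at hc
            refine ⟨r ⊔ star s, hc, ⟨r, star s, Or.inl rfl, Or.inr rfl, rfl⟩, Or.inr ?_⟩
            have hns2 : ¬ Nested star s r := not_nested_symm h hns
            have := (K_common h hQ hQ' hs hs' hrQ hrQ' hns2).2
            rw [sup_comm (star s) r] at this
            exact this hc
        · -- r ∈ Q, r* ∈ Q' : r distinguishes (Q, Q') too.
          rcases subm s r hsS hrS with hc | hc
          · refine ⟨s ⊔ r, hc, ⟨r, s, Or.inl rfl, Or.inl rfl, sup_comm s r⟩, Or.inr ?_⟩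
            exact (K_dist h hQ hQ' hs hs' hrQ hrQ' (not_nested_symm h hns)).1 hc
          · refine ⟨star s ⊔ star r, hc,
              ⟨star r, star s, Or.inr rfl, Or.inr rfl, sup_comm _ _⟩, Or.inr ?_⟩
            exact (K_dist h hQ hQ' hs hs' hrQ hrQ' (not_nested_symm h hns)).2 hc
      · rcases (hQ'.1.2 r hrS).1 with hrQ' | hrQ'
        · -- r* ∈ Q, r ∈ Q' : r distinguishes (Q, Q') with star r ∈ Q.
          have hrr : star (star r) ∈ Q' := by rw [ori_ss h]; exact hrQ'
          have hns2 : ¬ Nested star s (star r) :=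
            not_nested_star_right h (not_nested_symm h hns)
          rcases subm s (star r) hsS hrS' with hc | hc
          · refine ⟨s ⊔ star r, hc, ⟨star r, s, Or.inr rfl, Or.inl rfl, sup_comm _ _⟩,
              Or.inr ?_⟩
            exact (K_dist h hQ hQ' hs hs' hrQ hrr hns2).1 hc
          · rw [ori_ss h] at hc
            refine ⟨star s ⊔ r, hc, ⟨r, star s, Or.inl rfl, Or.inr rfl, sup_comm _ _⟩,
              Or.inr ?_⟩
            have := (K_dist h hQ hQ' hs hs' hrQ hrr hns2).2
            rw [ori_ss h] at this
            exact this hc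
        · -- r* ∈ Q ∩ Q' : common for (Q, Q') with x = r*.  Case C.
          rcases subm r s hrS hsS with hc | hc
          · refine ⟨r ⊔ s, hc, ⟨r, s, Or.inl rfl, Or.inl rfl, rfl⟩, Or.inl ?_⟩
            exact (K_common h hP hP' hr hr' hsP hsP' hns).1 hc
          · refine ⟨star r ⊔ star s, hc,
              ⟨star r, star s, Or.inr rfl, Or.inr rfl, rfl⟩, Or.inr ?_⟩
            have hns2 : ¬ Nested star s (star r) :=
              not_nested_star_right h (not_nested_symm h hns)
            have := (K_common h hQ hQ' hs hs' hrQ hrQ' hns2).2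
            rw [sup_comm (star s) (star r)] at this
            exact this hc
    · -- s ∈ P, s* ∈ P' : s distinguishes (P, P') too.  Case A.
      rcases subm r s hrS hsS with hc | hc
      · refine ⟨r ⊔ s, hc, ⟨r, s, Or.inl rfl, Or.inl rfl, rfl⟩, Or.inl ?_⟩
        exact (K_dist h hP hP' hr hr' hsP hsP' hns).1 hc
      · refine ⟨star r ⊔ star s, hc,
          ⟨star r, star s, Or.inr rfl, Or.inr rfl, rfl⟩, Or.inl ?_⟩
        exact (K_dist h hP hP' hr hr' hsP hsP' hns).2 hc
  · -- s* ∈ P; orientation of s in P'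
    rcases (hP'.1.2 s hsS).1 with hsP' | hsP'
    · -- s* ∈ P, s ∈ P' : s distinguishes (P, P'), oriented s* ∈ P.
      have hss : star (star s) ∈ P' := by rw [ori_ss h]; exact hsP'
      have hns2 : ¬ Nested star r (star s) := not_nested_star_right h hns
      rcases subm r (star s) hrS hsS' with hc | hc
      · refine ⟨r ⊔ star s, hc, ⟨r, star s, Or.inl rfl, Or.inr rfl, rfl⟩, Or.inl ?_⟩
        exact (K_dist h hP hP' hr hr' hsP hss hns2).1 hc
      · rw [ori_ss h] at hc
        refine ⟨star r ⊔ s, hc, ⟨star r, s, Or.inr rfl, Or.inl rfl, rfl⟩, Or.inl ?_⟩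
        have := (K_dist h hP hP' hr hr' hsP hss hns2).2
        rw [ori_ss h] at this
        exact this hc
    · -- s* ∈ P ∩ P' : common for (P, P') with y = s*.
      have hns2 : ¬ Nested star r (star s) := not_nested_star_right h hns
      rcases (hQ.1.2 r hrS).1 with hrQ | hrQ
      · rcases (hQ'.1.2 r hrS).1 with hrQ' | hrQ'
        · -- r ∈ Q ∩ Q' : case C with σ = s*, ρ = r.
          rcases subm (star r) (star s) hrS' hsS' with hc | hc
          · refine ⟨star r ⊔ star s, hc,
              ⟨star r, star s, Or.inr rfl, Or.inr rfl, rfl⟩, Or.inl ?_⟩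
            exact (K_common h hP hP' hr hr' hsP hsP' hns2).2 hc
          · rw [ori_ss h, ori_ss h] at hc
            refine ⟨r ⊔ s, hc, ⟨r, s, Or.inl rfl, Or.inl rfl, rfl⟩, Or.inr ?_⟩
            have := (K_common h hQ hQ' hs hs' hrQ hrQ' (not_nested_symm h hns)).1
            rw [sup_comm s r] at this
            exact this hc
        · -- r ∈ Q, r* ∈ Q' : r distinguishes (Q, Q').
          rcases subm s r hsS hrS with hc | hc
          · refine ⟨s ⊔ r, hc, ⟨r, s, Or.inl rfl, Or.inl rfl, sup_comm _ _⟩, Or.inr ?_⟩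
            exact (K_dist h hQ hQ' hs hs' hrQ hrQ' (not_nested_symm h hns)).1 hc
          · refine ⟨star s ⊔ star r, hc,
              ⟨star r, star s, Or.inr rfl, Or.inr rfl, sup_comm _ _⟩, Or.inr ?_⟩
            exact (K_dist h hQ hQ' hs hs' hrQ hrQ' (not_nested_symm h hns)).2 hc
      · rcases (hQ'.1.2 r hrS).1 with hrQ' | hrQ'
        · -- r* ∈ Q, r ∈ Q' : r distinguishes (Q, Q') with star r ∈ Q.
          have hrr : star (star r) ∈ Q' := by rw [ori_ss h]; exact hrQ'
          have hns3 : ¬ Nested star s (star r) :=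
            not_nested_star_right h (not_nested_symm h hns)
          rcases subm s (star r) hsS hrS' with hc | hc
          · refine ⟨s ⊔ star r, hc, ⟨star r, s, Or.inr rfl, Or.inl rfl, sup_comm _ _⟩,
              Or.inr ?_⟩
            exact (K_dist h hQ hQ' hs hs' hrQ hrr hns3).1 hc
          · rw [ori_ss h] at hc
            refine ⟨star s ⊔ r, hc, ⟨r, star s, Or.inl rfl, Or.inr rfl, sup_comm _ _⟩,
              Or.inr ?_⟩
            have := (K_dist h hQ hQ' hs hs' hrQ hrr hns3).2
            rw [ori_ss h] at this
            exact this hc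
        · -- r* ∈ Q ∩ Q' : case C with σ = s*, ρ = r*.
          rcases subm r (star s) hrS hsS' with hc | hc
          · refine ⟨r ⊔ star s, hc, ⟨r, star s, Or.inl rfl, Or.inr rfl, rfl⟩, Or.inl ?_⟩
            exact (K_common h hP hP' hr hr' hsP hsP' hns2).1 hc
          · rw [ori_ss h] at hc
            refine ⟨star r ⊔ s, hc, ⟨star r, s, Or.inr rfl, Or.inl rfl, rfl⟩, Or.inr ?_⟩
            have hns3 : ¬ Nested star s (star r) :=
              not_nested_star_right h (not_nested_symm h hns)
            have := (K_common h hQ hQ' hs hs' hrQ hrQ' hns3).1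
            rw [sup_comm s (star r)] at this
            exact this hc

/-- The corner lemma, wrapper taking `Distinguishes` hypotheses. -/
lemma corner_lemma (h : OrderReversingInvolution star)
    (hSclosed : ∀ s ∈ S, star s ∈ S) (hSsub : StructSubmodular S)
    {P P' Q Q' : Set U}
    (hP : IsProfile star S P) (hP' : IsProfile star S P')
    (hQ : IsProfile star S Q) (hQ' : IsProfile star S Q')
    {r s : U} (hrS : r ∈ S) (hsS : s ∈ S)
    (hDr : Distinguishes star r P P') (hDs : Distinguishes star s Q Q')
    (hns : ¬ Nested star r s) :
    ∃ c, c ∈ S ∧ IsCornerSep star r s c ∧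
      (Distinguishes star c P P' ∨ Distinguishes star c Q Q') := by
  rcases hDr with ⟨h1, h2⟩ | ⟨h1, h2⟩ <;> rcases hDs with ⟨g1, g2⟩ | ⟨g1, g2⟩
  · exact corner_core h hSclosed hSsub hP hP' hQ hQ' hrS hsS h1 h2 g1 g2 hns
  · obtain ⟨c, hc1, hc2, hc3⟩ :=
      corner_core h hSclosed hSsub hP hP' hQ' hQ hrS hsS h1 h2 g2 g1 hns
    exact ⟨c, hc1, hc2, hc3.imp id dist_symm⟩
  · obtain ⟨c, hc1, hc2, hc3⟩ :=
      corner_core h hSclosed hSsub hP' hP hQ hQ' hrS hsS h2 h1 g1 g2 hns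
    exact ⟨c, hc1, hc2, hc3.imp dist_symm id⟩
  · obtain ⟨c, hc1, hc2, hc3⟩ :=
      corner_core h hSclosed hSsub hP' hP hQ' hQ hrS hsS h2 h1 g2 g1 hns
    exact ⟨c, hc1, hc2, hc3.imp dist_symm dist_symm⟩

end Corner

section Main

variable [Lattice U] [Fintype U] {star : U → U} {S : Set U}

/-- The main recursion: given a finite family `J` of pairs of profiles, each of
which admits a distinguisher nested with the frozen nested set `M`, there is a
set `N ⊆ S`, nested and nested with `M`, distinguishing every pair in `J`. -/
lemma main_rec (h : OrderReversingInvolution star)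
    (hSclosed : ∀ s ∈ S, star s ∈ S) (hSsub : StructSubmodular S)
    (n : ℕ) :
    ∀ (J : Finset (Set U × Set U)) (M : Set U), J.card ≤ n →
    (∀ π ∈ J, IsProfile star S π.1 ∧ IsProfile star S π.2) →
    (∀ m ∈ M, m ∈ S) →
    (∀ m ∈ M, ∀ m' ∈ M, Nested star m m') →
    (∀ π ∈ J, ∃ d, d ∈ S ∧ Distinguishes star d π.1 π.2 ∧
      ∀ m ∈ M, Nested star d m) →
    ∃ N : Set U, N ⊆ S ∧ (∀ a ∈ N, ∀ b ∈ N, Nested star a b) ∧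
      (∀ a ∈ N, ∀ m ∈ M, Nested star a m) ∧
      (∀ π ∈ J, ∃ c ∈ N, Distinguishes star c π.1 π.2) := by
  classical
  induction n with
  | zero =>
    intro J M hcard _ _ _ _
    have : J = ∅ := Finset.card_eq_zero.mp (Nat.le_zero.mp hcard)
    subst this
    exact ⟨∅, by simp, by simp, by simp, by simp⟩
  | succ n ih =>
    intro J M hcard hJprof hMS hMnest hJdist
    rcases Finset.eq_empty_or_nonempty J with rfl | ⟨ρ, hρJ⟩
    · exact ⟨∅, by simp, by simp, by simp, by simp⟩
    set J0 := J.erase ρ with hJ0def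
    have hJ0card : J0.card ≤ n := by
      have h1 : J0.card = J.card - 1 := by
        rw [hJ0def]; exact Finset.card_erase_of_mem hρJ
      omega
    have hJ0sub : J0 ⊆ J := Finset.erase_subset _ _
    obtain ⟨N0, hN0S, hN0nest, hN0M, hN0dist⟩ :=
      ih J0 M hJ0card (fun π hπ => hJprof π (hJ0sub hπ)) hMS hMnest
        (fun π hπ => hJdist π (hJ0sub hπ))
    -- choose a distinguisher of ρ, nested with M, crossing as few of N0 as possible
    set Dm : Set U := {d | d ∈ S ∧ Distinguishes star d ρ.1 ρ.2 ∧
      ∀ m ∈ M, Nested star d m} with hDmdef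
    have hDmne : Dm.Nonempty := by
      obtain ⟨d, hd1, hd2, hd3⟩ := hJdist ρ hρJ
      exact ⟨d, hd1, hd2, hd3⟩
    set k : U → ℕ := fun d => {t | t ∈ N0 ∧ ¬ Nested star d t}.ncard with hkdef
    have hKne : (k '' Dm).Nonempty := hDmne.image k
    obtain ⟨a, haDm, hka⟩ := Nat.sInf_mem hKne
    have hamin : ∀ d ∈ Dm, k a ≤ k d := by
      intro d hd
      rw [hka]
      exact Nat.sInf_le ⟨d, hd, rfl⟩
    obtain ⟨haS, haD, haM⟩ := haDm
    -- the pairs of J0 which still need a new distinguisher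
    set J' : Finset (Set U × Set U) :=
      J0.filter (fun π => ¬ ∃ t, t ∈ N0 ∧ Distinguishes star t π.1 π.2 ∧
        Nested star a t) with hJ'def
    have hJ'sub : J' ⊆ J0 := Finset.filter_subset _ _
    have hJ'card : J'.card ≤ n := le_trans (Finset.card_le_card hJ'sub) hJ0card
    -- key claim: each pair in J' has a distinguisher which is a corner
    have key : ∀ π ∈ J', ∃ c, c ∈ S ∧ Distinguishes star c π.1 π.2 ∧
        Nested star c a ∧ (∀ m ∈ M, Nested star c m) ∧
        (∀ t ∈ N0, Nested star a t → Nested star c t) := by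
      intro π hπJ'
      have hπJ0 : π ∈ J0 := hJ'sub hπJ'
      have hπno : ¬ ∃ t, t ∈ N0 ∧ Distinguishes star t π.1 π.2 ∧ Nested star a t :=
        (Finset.mem_filter.mp hπJ').2
      obtain ⟨t, htN0, htD⟩ := hN0dist π hπJ0
      have hcross : ¬ Nested star a t := fun hn => hπno ⟨t, htN0, htD, hn⟩
      obtain ⟨hρ1, hρ2⟩ := hJprof ρ hρJ
      obtain ⟨hπ1, hπ2⟩ := hJprof π (hJ0sub hπJ0)
      obtain ⟨c, hcS, hcorn, hcdist⟩ :=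
        corner_lemma h hSclosed hSsub hρ1 hρ2 hπ1 hπ2 haS (hN0S htN0) haD htD hcross
      -- a corner is nested with `a`, with `M`, and with the `a`-nested part of N0
      have hca : Nested star c a := nested_symm h (corner_nested_left h hcorn)
      have hcM : ∀ m ∈ M, Nested star c m := by
        intro m hm
        have h1 : Nested star m a := nested_symm h (haM m hm)
        have h2 : Nested star m t := nested_symm h (hN0M t htN0 m hm)
        exact nested_symm h (fish h hcross hcorn h1 h2)
      have hckeep : ∀ t' ∈ N0, Nested star a t' → Nested star c t' := by
        intro t' ht' hat'
        have h1 : Nested star t' a := nested_symm h hat'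
        have h2 : Nested star t' t := hN0nest t' ht' t htN0
        exact nested_symm h (fish h hcross hcorn h1 h2)
      rcases hcdist with hcρ | hcπ
      · -- impossible: contradicts minimality of a
        exfalso
        have hcDm : c ∈ Dm := ⟨hcS, hcρ, fun m hm => hcM m hm⟩
        have hlt : k c < k a := by
          apply Set.ncard_lt_ncard
          · rw [Set.ssubset_def]
            constructor
            · rintro t' ⟨ht'N0, ht'c⟩
              refine ⟨ht'N0, fun hat' => ht'c (hckeep t' ht'N0 hat')⟩
            · intro hback
              have htmem : t ∈ {t' | t' ∈ N0 ∧ ¬ Nested star a t'} := ⟨htN0, hcross⟩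
              have := (hback htmem).2
              exact this (nested_symm h (corner_nested_right h hcorn))
          · exact Set.toFinite _
        exact absurd (hamin c hcDm) (by omega)
      · exact ⟨c, hcS, hcπ, hca, hcM, hckeep⟩
    -- the kept part of N0 and the new frozen set
    set Msub : Set U := {t | t ∈ N0 ∧ Nested star a t} with hMsubdef
    set M' : Set U := M ∪ insert a Msub with hM'def
    have hM'S : ∀ m ∈ M', m ∈ S := by
      rintro m hm
      rcases hm with hm | hm
      · exact hMS m hm
      · rcases hm with rfl | hm
        · exact haS
        · exact hN0S hm.1
    have hM'nest : ∀ m ∈ M', ∀ m' ∈ M', Nested star m m' := by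
      rintro m hm m' hm'
      rcases hm with hm | hm
      · rcases hm' with hm' | hm'
        · exact hMnest m hm m' hm'
        · rcases hm' with rfl | hm'
          · exact nested_symm h (haM m hm)
          · exact nested_symm h (hN0M m' hm'.1 m hm)
      · rcases hm with rfl | hm
        · rcases hm' with hm' | hm'
          · exact haM m' hm'
          · rcases hm' with rfl | hm'
            · exact Or.inl le_rfl
            · exact hm'.2
        · rcases hm' with hm' | hm'
          · exact hN0M m hm.1 m' hm'
          · rcases hm' with rfl | hm'
            · exact nested_symm h hm.2
            · exact hN0nest m hm.1 m' hm'.1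
    have hJ'dist : ∀ π ∈ J', ∃ d, d ∈ S ∧ Distinguishes star d π.1 π.2 ∧
        ∀ m ∈ M', Nested star d m := by
      intro π hπ
      obtain ⟨c, hcS, hcD, hca, hcM, hckeep⟩ := key π hπ
      refine ⟨c, hcS, hcD, ?_⟩
      rintro m hm
      rcases hm with hm | hm
      · exact hcM m hm
      · rcases hm with rfl | hm
        · exact hca
        · exact hckeep m hm.1 hm.2
    obtain ⟨N1, hN1S, hN1nest, hN1M', hN1dist⟩ :=
      ih J' M' hJ'card (fun π hπ => hJprof π (hJ0sub (hJ'sub hπ))) hM'S hM'nest hJ'dist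
    -- assemble the final nested set
    refine ⟨N1 ∪ insert a Msub, ?_, ?_, ?_, ?_⟩
    · rintro x hx
      rcases hx with hx | hx
      · exact hN1S hx
      · rcases hx with rfl | hx
        · exact haS
        · exact hN0S hx.1
    · rintro x hx y hy
      rcases hx with hx | hx
      · rcases hy with hy | hy
        · exact hN1nest x hx y hy
        · exact hN1M' x hx y (Or.inr hy)
      · rcases hy with hy | hy
        · exact nested_symm h (hN1M' y hy x (Or.inr hx))
        · exact hM'nest x (Or.inr hx) y (Or.inr hy)
    · rintro x hx m hm
      rcases hx with hx | hx
      · exact hN1M' x hx m (Or.inl hm)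
      · rcases hx with rfl | hx
        · exact haM m hm
        · exact hN0M x hx.1 m hm
    · intro π hπJ
      by_cases hπρ : π = ρ
      · subst hπρ
        exact ⟨a, Or.inr (Or.inl rfl), haD⟩
      · have hπJ0 : π ∈ J0 := Finset.mem_erase.mpr ⟨hπρ, hπJ⟩
        by_cases hπJ' : π ∈ J'
        · obtain ⟨c, hcN1, hcD⟩ := hN1dist π hπJ'
          exact ⟨c, Or.inl hcN1, hcD⟩
        · have : ∃ t, t ∈ N0 ∧ Distinguishes star t π.1 π.2 ∧ Nested star a t := by
            by_contra hno
            exact hπJ' (Finset.mem_filter.mpr ⟨hπJ0, hno⟩)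
          obtain ⟨t, htN0, htD, hat⟩ := this
          exact ⟨t, Or.inr (Or.inr ⟨htN0, hat⟩), htD⟩

end Main

/-- **Tree-of-tangles theorem for structurally submodular separation
systems.** -/
theorem tree_of_tangles_structurally_submodular [Lattice U] [Fintype U]
    (star : U → U) (hstar : OrderReversingInvolution star)
    (S : Set U) (hSclosed : ∀ s ∈ S, star s ∈ S) (hSsub : StructSubmodular S)
    (Ps : Set (Set U)) (hPs : ∀ P ∈ Ps, IsProfile star S P) :
    ∃ N ⊆ S, (∀ a ∈ N, ∀ b ∈ N, Nested star a b) ∧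
      ∀ P ∈ Ps, ∀ P' ∈ Ps, P ≠ P' → ∃ s ∈ N, Distinguishes star s P P' := by
  classical
  haveI : Finite (Set U) := by infer_instance
  set PPs : Set (Set U × Set U) :=
    {π | π.1 ∈ Ps ∧ π.2 ∈ Ps ∧ π.1 ≠ π.2} with hPPsdef
  have hfin : PPs.Finite := Set.toFinite _
  set J : Finset (Set U × Set U) := hfin.toFinset with hJdef
  have hmemJ : ∀ π : Set U × Set U, π ∈ J ↔ (π.1 ∈ Ps ∧ π.2 ∈ Ps ∧ π.1 ≠ π.2) := by
    intro π
    rw [hJdef, Set.Finite.mem_toFinset]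
    rfl
  have hJprof : ∀ π ∈ J, IsProfile star S π.1 ∧ IsProfile star S π.2 := by
    intro π hπ
    obtain ⟨h1, h2, _⟩ := (hmemJ π).mp hπ
    exact ⟨hPs _ h1, hPs _ h2⟩
  have hJdist : ∀ π ∈ J, ∃ d, d ∈ S ∧ Distinguishes star d π.1 π.2 ∧
      ∀ m ∈ (∅ : Set U), Nested star d m := by
    intro π hπ
    obtain ⟨h1, h2, hne⟩ := (hmemJ π).mp hπ
    have hP := hPs _ h1
    have hP' := hPs _ h2
    have : ∃ x, ¬ (x ∈ π.1 ↔ x ∈ π.2) := by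
      by_contra hno
      push_neg at hno
      exact hne (Set.ext fun x => hno x)
    obtain ⟨x, hx⟩ := this
    by_cases hxP : x ∈ π.1
    · have hxP' : x ∉ π.2 := fun hh => hx ⟨fun _ => hh, fun _ => hxP⟩
      have hxS : x ∈ S := hP.1.1 hxP
      have : star x ∈ π.2 := by
        rcases (hP'.1.2 x hxS).1 with hh | hh
        · exact absurd hh hxP'
        · exact hh
      exact ⟨x, hxS, Or.inl ⟨hxP, this⟩, by simp⟩
    · have hxP' : x ∈ π.2 := by
        by_contra hh
        exact hx ⟨fun h' => absurd h' hxP, fun h' => absurd h' hh⟩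
      have hxS : x ∈ S := hP'.1.1 hxP'
      have : star x ∈ π.1 := by
        rcases (hP.1.2 x hxS).1 with hh | hh
        · exact absurd hh hxP
        · exact hh
      exact ⟨x, hxS, Or.inr ⟨this, hxP'⟩, by simp⟩
  obtain ⟨N, hNS, hNnest, _, hNdist⟩ :=
    main_rec hstar hSclosed hSsub J.card J (∅ : Set U) le_rfl hJprof
      (by simp) (by simp) hJdist
  refine ⟨N, hNS, hNnest, ?_⟩
  intro P hP P' hP' hne
  have : (P, P') ∈ J := (hmemJ (P, P')).mpr ⟨hP, hP', hne⟩
  exact hNdist (P, P') this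
end
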